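/- Let φ : ℝ^{n−1} → ℝ be convex with φ(0) = 0, Ω its epigraph, and for h > 0 let B_h = { (x₁, x₂) : ∃ y₁ ∈ ℝ^{n−1}, x₂ ≥ φ(x₁ − h y₁) + h φ(y₁) + h }. Then B_h = { (x₁, x₂) ∈ ℝⁿ : x₂ ≥ h + (1 + h) φ(x₁/(1 + h)) }. -/

import Mathlib

/-- for `φ` convex with `φ(0)=0` and `h > 0`,
`B_h = {(x₁,x₂) : x₂ ≥ h + (1+h) φ(x₁/(1+h))}`. -/
theorem convex_support (m : ℕ) (φ : EuclideanSpace ℝ (Fin m) → ℝ)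
    (hφ_conv : ConvexOn ℝ Set.univ φ) (hφ0 : φ 0 = 0) :
    ∀ h : ℝ, 0 < h →
      {p : EuclideanSpace ℝ (Fin m) × ℝ |
          ∃ y : EuclideanSpace ℝ (Fin m), φ (p.1 - h • y) + h * φ y + h ≤ p.2}
        = {p : EuclideanSpace ℝ (Fin m) × ℝ | h + (1 + h) * φ ((1 + h)⁻¹ • p.1) ≤ p.2} := by
  intro h hh
  have h1 : (0:ℝ) < 1 + h := by linarith
  ext p
  obtain ⟨x, t⟩ := p
  simp only [Set.mem_setOf_eq]
  constructor
  · rintro ⟨y, hy⟩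
    set a := (1 + h)⁻¹ with ha
    have ha0 : 0 < a := inv_pos.mpr h1
    have hsum : a + h * a = 1 := by
      rw [ha]
      field_simp
    have hconv := hφ_conv.2 (Set.mem_univ (x - h • y)) (Set.mem_univ y)
      (le_of_lt ha0) (by positivity) hsum
    have hpt : a • (x - h • y) + (h * a) • y = a • x := by
      rw [smul_sub, smul_smul, mul_comm a h]
      abel
    rw [hpt] at hconv
    have : (1 + h) * φ (a • x) ≤ φ (x - h • y) + h * φ y := by
      have := mul_le_mul_of_nonneg_left hconv (le_of_lt h1)
      calc (1 + h) * φ (a • x) ≤ (1 + h) * (a * φ (x - h • y) + h * a * φ y) := this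
        _ = ((1 + h) * a) * φ (x - h • y) + ((1 + h) * a) * (h * φ y) := by ring
        _ = φ (x - h • y) + h * φ y := by
            rw [mul_inv_cancel₀ (ne_of_gt h1)]; ring
    linarith
  · intro hx
    refine ⟨(1 + h)⁻¹ • x, ?_⟩
    have hpt : x - h • (1 + h)⁻¹ • x = (1 + h)⁻¹ • x := by
      rw [smul_smul]
      nth_rewrite 1 [show x = (1:ℝ) • x from (one_smul ℝ x).symm]
      rw [← sub_smul]
      congr 1
      field_simp
      ring
    rw [hpt]
    linarith
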